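/- Let τ be a random variable taking values in the positive integers, and for each i ≥ 1 let L_i = 1{τ ≥ i}. Let (W_i, V_i)_{i≥1} be a process where, conditioned on the event {L_i = 1} and on (L^{i−1}, V^{i−1}, X), the channel output V_i given W_i has law Γ_{V|W}, and the Markov chain V_i → W_i → (L^{i−1}, V^{i−1}, X) holds. Then I(V^τ; X) ≤ H(τ) + C·E[τ], where C = max_{P_W} I(W;V) is the capacity of the DMC Γ_{V|W} and V^τ denotes the variable-length output string. -/

import Mathlib

noncomputable section
open scoped BigOperators
attribute [local instance] Classical.propDecidable

/-- Shannon entropy (base 2), convention `0 log 0 = 0`. -/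
noncomputable def ent {Ω S : Type*} [Fintype Ω] [DecidableEq S] (μ : Ω → ℝ) (f : Ω → S) : ℝ :=
  ∑ s ∈ Finset.univ.image f,
    -((∑ ω ∈ Finset.univ.filter fun ω => f ω = s, μ ω) *
      Real.logb 2 (∑ ω ∈ Finset.univ.filter fun ω => f ω = s, μ ω))

/-- Mutual information (base 2). -/
noncomputable def mi {Ω A B : Type*} [Fintype Ω] [DecidableEq A] [DecidableEq B]
    (μ : Ω → ℝ) (f : Ω → A) (g : Ω → B) : ℝ :=
  ent μ f + ent μ g - ent μ (fun ω => (f ω, g ω))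

/-- Capacity `C = max_{P_W} I(W;V)` of the DMC `Γ_{V|W}` (base-2 logs, convention
`0 log 0 = 0`), expressed as a supremum over input distributions. -/
noncomputable def capacity {𝒲 𝒱 : Type*} [Fintype 𝒲] [Fintype 𝒱] (Γ : 𝒲 → 𝒱 → ℝ) : ℝ :=
  sSup {r : ℝ | ∃ p : 𝒲 → ℝ, (∀ w, 0 ≤ p w) ∧ (∑ w, p w = 1) ∧
    r = ∑ w, ∑ v, if p w * Γ w v = 0 then 0 else
      p w * Γ w v * Real.logb 2 (Γ w v / (∑ w', p w' * Γ w' v))}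

namespace Stmt12Aux

variable {Ω : Type*} [Fintype Ω] {S T : Type*} [DecidableEq S] [DecidableEq T]

/-- probability mass of the fiber `{f = s}`. -/
def pm (μ : Ω → ℝ) (f : Ω → S) (s : S) : ℝ :=
  ∑ ω ∈ Finset.univ.filter fun ω => f ω = s, μ ω

lemma pm_def (μ : Ω → ℝ) (f : Ω → S) (s : S) :
    pm μ f s = ∑ ω ∈ Finset.univ.filter fun ω => f ω = s, μ ω := rfl

lemma pm_nonneg {μ : Ω → ℝ} (hμ0 : ∀ ω, 0 ≤ μ ω) (f : Ω → S) (s : S) : 0 ≤ pm μ f s :=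
  Finset.sum_nonneg fun ω _ => hμ0 ω

lemma pm_ext {μ : Ω → ℝ} {f : Ω → S} {g : Ω → T} {s : S} {t : T}
    (h : ∀ ω, f ω = s ↔ g ω = t) : pm μ f s = pm μ g t := by
  unfold pm; apply Finset.sum_congr _ (fun _ _ => rfl)
  ext ω; simp [h ω]

lemma pm_le {μ : Ω → ℝ} (hμ0 : ∀ ω, 0 ≤ μ ω) {f : Ω → S} {g : Ω → T} {s : S} {t : T}
    (h : ∀ ω, f ω = s → g ω = t) : pm μ f s ≤ pm μ g t := by
  unfold pm
  apply Finset.sum_le_sum_of_subset_of_nonneg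
  · intro ω hω; simp only [Finset.mem_filter, Finset.mem_univ, true_and] at *; exact h ω hω
  · intro ω _ _; exact hμ0 ω

lemma self_le_pm {μ : Ω → ℝ} (hμ0 : ∀ ω, 0 ≤ μ ω) (f : Ω → S) (ω : Ω) :
    μ ω ≤ pm μ f (f ω) := by
  unfold pm
  apply Finset.single_le_sum (fun ω _ => hμ0 ω)
  simp

/-- group an `ω`-sum over any finset covering the image. -/
lemma sum_pm_comp (μ : Ω → ℝ) (f : Ω → S) (t : Finset S) (ht : ∀ ω, f ω ∈ t) (F : S → ℝ) :
    ∑ s ∈ t, pm μ f s * F s = ∑ ω, μ ω * F (f ω) := by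
  rw [← Finset.sum_fiberwise_of_maps_to (fun ω _ => ht ω) (fun ω => μ ω * F (f ω))]
  apply Finset.sum_congr rfl
  intro s _
  rw [pm, Finset.sum_mul]
  apply Finset.sum_congr rfl
  intro ω hω
  simp only [Finset.mem_filter] at hω
  rw [hω.2]

lemma sum_comp (μ : Ω → ℝ) (f : Ω → S) (F : S → ℝ) :
    ∑ s ∈ Finset.univ.image f, pm μ f s * F s = ∑ ω, μ ω * F (f ω) :=
  sum_pm_comp μ f _ (fun ω => Finset.mem_image_of_mem f (Finset.mem_univ ω)) F

lemma sum_pm (μ : Ω → ℝ) (f : Ω → S) (t : Finset S) (ht : ∀ ω, f ω ∈ t) :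
    ∑ s ∈ t, pm μ f s = ∑ ω, μ ω := by
  have := sum_pm_comp μ f t ht (fun _ => 1)
  simpa using this

lemma sum_pm_filter (μ : Ω → ℝ) (f : Ω → S) (p : S → Prop) :
    ∑ s ∈ (Finset.univ.image f).filter p, pm μ f s
      = ∑ ω ∈ Finset.univ.filter (fun ω => p (f ω)), μ ω := by
  rw [Finset.sum_filter, Finset.sum_filter]
  have h1 : ∀ s, (if p s then pm μ f s else 0) = pm μ f s * (if p s then 1 else 0) := by
    intro s; split <;> simp
  rw [Finset.sum_congr rfl (fun s _ => h1 s),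
    sum_comp μ f (fun s => if p s then 1 else 0)]
  apply Finset.sum_congr rfl
  intro ω _
  split <;> simp

/-- marginalization: summing a joint mass over the first coordinate. -/
lemma pm_split (μ : Ω → ℝ) (f : Ω → S) (g : Ω → T) (t : Finset T) (ht : ∀ ω, g ω ∈ t) (s : S) :
    ∑ x ∈ t, pm μ (fun ω => (g ω, f ω)) (x, s) = pm μ f s := by
  unfold pm
  rw [← Finset.sum_fiberwise_of_maps_to (s := Finset.univ.filter fun ω => f ω = s)
    (g := g) (fun ω _ => ht ω) μ]
  apply Finset.sum_congr rfl
  intro x _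
  apply Finset.sum_congr _ (fun _ _ => rfl)
  ext ω
  simp only [Finset.mem_filter, Finset.mem_univ, true_and, Prod.mk.injEq]
  tauto

lemma ent_eq (μ : Ω → ℝ) (f : Ω → S) :
    ent μ f = ∑ ω, μ ω * (-Real.logb 2 (pm μ f (f ω))) := by
  rw [← sum_comp μ f (fun s => -Real.logb 2 (pm μ f s))]
  unfold ent pm
  exact Finset.sum_congr rfl fun s _ => by ring

lemma ent_congr {μ : Ω → ℝ} {f : Ω → S} {g : Ω → T}
    (h : ∀ ω ω', f ω = f ω' ↔ g ω = g ω') : ent μ f = ent μ g := by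
  rw [ent_eq, ent_eq]
  apply Finset.sum_congr rfl
  intro ω _
  rw [pm_ext (g := g) (t := g ω) fun ω' => h ω' ω]

lemma ent_const {μ : Ω → ℝ} {f : Ω → S} (hμ1 : ∑ ω, μ ω = 1)
    (h : ∀ ω ω', f ω = f ω') : ent μ f = 0 := by
  rw [ent_eq]
  apply Finset.sum_eq_zero
  intro ω _
  have : pm μ f (f ω) = 1 := by
    rw [← hμ1]
    unfold pm
    apply Finset.sum_congr _ (fun _ _ => rfl)
    ext ω'
    simp [h ω' ω]
  rw [this]
  simp


variable {α β γ δ : Type*}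
  [DecidableEq α] [DecidableEq β] [DecidableEq γ] [DecidableEq δ]


/-- conditional mutual information `I(A;B|U)` expressed via entropies. -/
noncomputable def cmi (μ : Ω → ℝ) (A : Ω → α) (B : Ω → β) (U : Ω → γ) : ℝ :=
  ent μ (fun ω => (A ω, U ω)) + ent μ (fun ω => (B ω, U ω))
    - ent μ (fun ω => (A ω, (B ω, U ω))) - ent μ U

lemma mi_chain (μ : Ω → ℝ) (A : Ω → α) (B : Ω → β) (U : Ω → γ) :
    mi μ (fun ω => (A ω, U ω)) B = mi μ U B + cmi μ A B U := by
  have h1 : ent μ (fun ω => ((A ω, U ω), B ω)) = ent μ (fun ω => (A ω, (B ω, U ω))) :=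
    ent_congr (by intro ω ω'; simp only [Prod.ext_iff]; tauto)
  have h2 : ent μ (fun ω => (U ω, B ω)) = ent μ (fun ω => (B ω, U ω)) :=
    ent_congr (by intro ω ω'; simp only [Prod.ext_iff]; tauto)
  unfold mi cmi
  rw [h1, h2]
  ring

lemma cmi_chain (μ : Ω → ℝ) (A : Ω → α) (A' : Ω → δ) (B : Ω → β) (U : Ω → γ) :
    cmi μ (fun ω => (A ω, A' ω)) B U
      = cmi μ A B U + cmi μ A' B (fun ω => (A ω, U ω)) := by
  have h1 : ent μ (fun ω => (A' ω, (A ω, U ω))) = ent μ (fun ω => ((A ω, A' ω), U ω)) :=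
    ent_congr (by intro ω ω'; simp only [Prod.ext_iff]; tauto)
  have h2 : ent μ (fun ω => (B ω, (A ω, U ω))) = ent μ (fun ω => (A ω, (B ω, U ω))) :=
    ent_congr (by intro ω ω'; simp only [Prod.ext_iff]; tauto)
  have h3 : ent μ (fun ω => (A' ω, (B ω, (A ω, U ω))))
      = ent μ (fun ω => ((A ω, A' ω), (B ω, U ω))) :=
    ent_congr (by intro ω ω'; simp only [Prod.ext_iff]; tauto)
  unfold cmi
  rw [h1, h2, h3]
  ring

/-- joint entropy dominates marginal entropy. -/
lemma ent_le_ent_pair {μ : Ω → ℝ} (hμ0 : ∀ ω, 0 ≤ μ ω) (f : Ω → α) (g : Ω → β) :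
    ent μ g ≤ ent μ (fun ω => (f ω, g ω)) := by
  rw [ent_eq, ent_eq]
  apply Finset.sum_le_sum
  intro ω _
  rcases eq_or_lt_of_le (hμ0 ω) with h | h
  · rw [← h]; simp
  · have h1 : 0 < pm μ (fun ω => (f ω, g ω)) (f ω, g ω) :=
      lt_of_lt_of_le h (self_le_pm hμ0 _ ω)
    have h2 : pm μ (fun ω => (f ω, g ω)) (f ω, g ω) ≤ pm μ g (g ω) :=
      pm_le hμ0 (fun ω' h' => by rw [Prod.mk.injEq] at h'; exact h'.2)
    have := Real.logb_le_logb_of_le (b := 2) (by norm_num) h1 h2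
    nlinarith

/-- termwise KL-type inequality. -/
lemma kl_term {p q r s : ℝ} (hp : 0 ≤ p) (hq : 0 ≤ q) (hpr : p ≤ r) (hps : p ≤ s)
    (hrq : r ≤ q) (hsq : s ≤ q) :
    (p - r * s / q) / Real.log 2
      ≤ p * (Real.logb 2 p + Real.logb 2 q - Real.logb 2 r - Real.logb 2 s) := by
  have hlog2 : 0 < Real.log 2 := Real.log_pos (by norm_num)
  rcases eq_or_lt_of_le hp with h | hp'
  · rw [← h]
    simp only [zero_sub, zero_mul]
    have hr : 0 ≤ r := le_trans hp hpr
    have hs : 0 ≤ s := le_trans hp hps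
    have : 0 ≤ r * s / q := div_nonneg (mul_nonneg hr hs) hq
    rw [div_le_iff₀ hlog2]
    nlinarith
  · have hr : 0 < r := lt_of_lt_of_le hp' hpr
    have hs : 0 < s := lt_of_lt_of_le hp' hps
    have hq' : 0 < q := lt_of_lt_of_le hr hrq
    have key : Real.log (r * s / (p * q)) ≤ r * s / (p * q) - 1 :=
      Real.log_le_sub_one_of_pos (by positivity)
    have hexp : Real.logb 2 p + Real.logb 2 q - Real.logb 2 r - Real.logb 2 s
        = (Real.log p + Real.log q - Real.log r - Real.log s) / Real.log 2 := by
      unfold Real.logb; ring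
    have hlogs : Real.log (r * s / (p * q))
        = Real.log r + Real.log s - Real.log p - Real.log q := by
      rw [Real.log_div (by positivity) (by positivity), Real.log_mul (ne_of_gt hr) (ne_of_gt hs),
        Real.log_mul (ne_of_gt hp') (ne_of_gt hq')]
      ring
    rw [hlogs] at key
    have hkey2 : p * (Real.log r + Real.log s - Real.log p - Real.log q)
        ≤ p * (r * s / (p * q) - 1) :=
      mul_le_mul_of_nonneg_left key (le_of_lt hp')
    have hid : p * (r * s / (p * q) - 1) = r * s / q - p := by
      field_simp
    have main : p - r * s / q ≤ p * (Real.log p + Real.log q - Real.log r - Real.log s) := by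
      nlinarith [hkey2, hid]
    rw [hexp, mul_div_assoc']
    exact div_le_div_of_nonneg_right main hlog2.le

/-- the bridging identity: conditional mutual information as a sum over joint values. -/
lemma cmi_eq (μ : Ω → ℝ) (A : Ω → α) (B : Ω → β) (U : Ω → γ) :
    cmi μ A B U = ∑ t ∈ Finset.univ.image (fun ω => (A ω, (B ω, U ω))),
      pm μ (fun ω => (A ω, (B ω, U ω))) t *
        (Real.logb 2 (pm μ (fun ω => (A ω, (B ω, U ω))) t)
          + Real.logb 2 (pm μ U t.2.2)
          - Real.logb 2 (pm μ (fun ω => (A ω, U ω)) (t.1, t.2.2))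
          - Real.logb 2 (pm μ (fun ω => (B ω, U ω)) t.2)) := by
  rw [sum_comp μ (fun ω => (A ω, (B ω, U ω)))
    (fun t => Real.logb 2 (pm μ (fun ω => (A ω, (B ω, U ω))) t)
          + Real.logb 2 (pm μ U t.2.2)
          - Real.logb 2 (pm μ (fun ω => (A ω, U ω)) (t.1, t.2.2))
          - Real.logb 2 (pm μ (fun ω => (B ω, U ω)) t.2))]
  unfold cmi
  rw [ent_eq μ (fun ω => (A ω, U ω)), ent_eq μ (fun ω => (B ω, U ω)),
    ent_eq μ (fun ω => (A ω, (B ω, U ω))), ent_eq μ U,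
    ← Finset.sum_add_distrib, ← Finset.sum_sub_distrib, ← Finset.sum_sub_distrib]
  apply Finset.sum_congr rfl
  intro ω _
  dsimp only
  ring

lemma cmi_nonneg {μ : Ω → ℝ} (hμ0 : ∀ ω, 0 ≤ μ ω) (A : Ω → α) (B : Ω → β) (U : Ω → γ) :
    0 ≤ cmi μ A B U := by
  classical
  set T : Ω → α × β × γ := fun ω => (A ω, (B ω, U ω)) with hT
  set v : α × β × γ → ℝ := fun t =>
    pm μ (fun ω => (A ω, U ω)) (t.1, t.2.2) * pm μ (fun ω => (B ω, U ω)) t.2 / pm μ U t.2.2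
    with hv
  have hterm : ∀ t ∈ Finset.univ.image T,
      (pm μ T t - v t) / Real.log 2
        ≤ pm μ T t * (Real.logb 2 (pm μ T t) + Real.logb 2 (pm μ U t.2.2)
            - Real.logb 2 (pm μ (fun ω => (A ω, U ω)) (t.1, t.2.2))
            - Real.logb 2 (pm μ (fun ω => (B ω, U ω)) t.2)) := by
    intro t _
    apply kl_term (pm_nonneg hμ0 _ _) (pm_nonneg hμ0 _ _)
    · exact pm_le hμ0 (fun ω h => by rw [hT] at h; rw [← h])
    · exact pm_le hμ0 (fun ω h => by rw [hT] at h; rw [← h])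
    · exact pm_le hμ0 (fun ω h => by
        rw [Prod.mk.injEq] at h; exact h.2)
    · exact pm_le hμ0 (fun ω h => by
        rw [Prod.mk.injEq] at h; exact h.2)
  have hvsum : ∑ t ∈ Finset.univ.image T, v t ≤ ∑ ω, μ ω := by
    have hsub : Finset.univ.image T ⊆
        (Finset.univ.image A) ×ˢ ((Finset.univ.image B) ×ˢ (Finset.univ.image U)) := by
      intro t ht
      rcases Finset.mem_image.1 ht with ⟨ω, _, rfl⟩
      simp [Finset.mem_product, hT]
    have h1 : ∑ t ∈ Finset.univ.image T, v t
        ≤ ∑ t ∈ (Finset.univ.image A) ×ˢ ((Finset.univ.image B) ×ˢ (Finset.univ.image U)), v t := by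
      apply Finset.sum_le_sum_of_subset_of_nonneg hsub
      intro t _ _
      exact div_nonneg (mul_nonneg (pm_nonneg hμ0 _ _) (pm_nonneg hμ0 _ _)) (pm_nonneg hμ0 _ _)
    have h2 : ∑ t ∈ (Finset.univ.image A) ×ˢ ((Finset.univ.image B) ×ˢ (Finset.univ.image U)), v t
        ≤ ∑ u ∈ Finset.univ.image U, pm μ U u := by
      rw [Finset.sum_product, ]
      have hre : ∀ a ∈ Finset.univ.image A,
          ∑ t ∈ (Finset.univ.image B) ×ˢ (Finset.univ.image U), v (a, t)
            = ∑ u ∈ Finset.univ.image U, ∑ b ∈ Finset.univ.image B, v (a, (b, u)) := by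
        intro a _
        rw [Finset.sum_product]
        exact Finset.sum_comm
      rw [Finset.sum_congr rfl hre, Finset.sum_comm]
      apply Finset.sum_le_sum
      intro u _
      by_cases hu : pm μ U u = 0
      · have hz : ∀ a ∈ Finset.univ.image A, ∀ b ∈ Finset.univ.image B, v (a, (b, u)) = 0 := by
          intro a _ b _
          rw [hv]
          dsimp only
          rw [hu]
          simp
        calc ∑ a ∈ Finset.univ.image A, ∑ b ∈ Finset.univ.image B, v (a, (b, u))
            = 0 := Finset.sum_eq_zero (fun a ha => Finset.sum_eq_zero (fun b hb => hz a ha b hb))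
          _ ≤ pm μ U u := pm_nonneg hμ0 _ _
      · have hfac : ∀ a, ∑ b ∈ Finset.univ.image B, v (a, (b, u))
            = pm μ (fun ω => (A ω, U ω)) (a, u) := by
          intro a
          have : ∀ b, v (a, (b, u)) = pm μ (fun ω => (A ω, U ω)) (a, u) / pm μ U u
              * pm μ (fun ω => (B ω, U ω)) (b, u) := by
            intro b; rw [hv]; dsimp only; ring
          rw [Finset.sum_congr rfl (fun b _ => this b), ← Finset.mul_sum,
            pm_split μ U B _ (fun ω => Finset.mem_image_of_mem B (Finset.mem_univ ω))]
          field_simp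
        rw [Finset.sum_congr rfl (fun a _ => hfac a),
          pm_split μ U A _ (fun ω => Finset.mem_image_of_mem A (Finset.mem_univ ω))]
    calc ∑ t ∈ Finset.univ.image T, v t
        ≤ ∑ u ∈ Finset.univ.image U, pm μ U u := le_trans h1 h2
      _ = ∑ ω, μ ω := sum_pm μ U _ (fun ω => Finset.mem_image_of_mem U (Finset.mem_univ ω))
  have hpsum : ∑ t ∈ Finset.univ.image T, pm μ T t = ∑ ω, μ ω :=
    sum_pm μ T _ (fun ω => Finset.mem_image_of_mem T (Finset.mem_univ ω))
  have hlog2 : 0 < Real.log 2 := Real.log_pos (by norm_num)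
  rw [cmi_eq]
  calc (0:ℝ) ≤ (∑ t ∈ Finset.univ.image T, pm μ T t - ∑ t ∈ Finset.univ.image T, v t)
        / Real.log 2 := by
        apply div_nonneg _ hlog2.le
        rw [hpsum]
        linarith
    _ = ∑ t ∈ Finset.univ.image T, (pm μ T t - v t) / Real.log 2 := by
        rw [← Finset.sum_sub_distrib, Finset.sum_div]
    _ ≤ _ := Finset.sum_le_sum hterm

/-- conditioning on more reduces conditional entropy. -/
lemma cond_reduce {μ : Ω → ℝ} (hμ0 : ∀ ω, 0 ≤ μ ω) (A : Ω → α) (Uv : Ω → γ) (g : γ → δ) :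
    ent μ (fun ω => (A ω, Uv ω)) - ent μ Uv
      ≤ ent μ (fun ω => (A ω, g (Uv ω))) - ent μ (fun ω => g (Uv ω)) := by
  have h := cmi_nonneg hμ0 A Uv (fun ω => g (Uv ω))
  unfold cmi at h
  have h1 : ent μ (fun ω => (Uv ω, g (Uv ω))) = ent μ Uv :=
    ent_congr (by intro ω ω'; simp only [Prod.ext_iff]; tauto)
  have h2 : ent μ (fun ω => (A ω, (Uv ω, g (Uv ω)))) = ent μ (fun ω => (A ω, Uv ω)) :=
    ent_congr (by intro ω ω'; simp only [Prod.ext_iff]; tauto)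
  rw [h1, h2] at h
  linarith

lemma cmi_le_condEnt {μ : Ω → ℝ} (hμ0 : ∀ ω, 0 ≤ μ ω) (A : Ω → α) (B : Ω → β) (U : Ω → γ) :
    cmi μ A B U ≤ ent μ (fun ω => (A ω, U ω)) - ent μ U := by
  have := ent_le_ent_pair hμ0 A (fun ω => (B ω, U ω))
  unfold cmi
  linarith

lemma mi_congr_left {μ : Ω → ℝ} {f : Ω → α} {f' : Ω → δ} (B : Ω → β)
    (h : ∀ ω ω', f ω = f ω' ↔ f' ω = f' ω') : mi μ f B = mi μ f' B := by
  unfold mi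
  rw [ent_congr h, ent_congr (f := fun ω => (f ω, B ω)) (g := fun ω => (f' ω, B ω))
    (by intro ω ω'; simp only [Prod.ext_iff]; rw [h])]

/-- data processing: a function of `f` has less information about `B`. -/
lemma mi_dpi {μ : Ω → ℝ} (hμ0 : ∀ ω, 0 ≤ μ ω) {f : Ω → α} {f' : Ω → δ} (B : Ω → β)
    (h : ∀ ω ω', f ω = f ω' → f' ω = f' ω') : mi μ f' B ≤ mi μ f B := by
  have hchain := mi_chain μ f B f'
  have hcongr : mi μ (fun ω => (f ω, f' ω)) B = mi μ f B := by
    apply mi_congr_left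
    intro ω ω'
    constructor
    · intro hh; rw [Prod.mk.injEq] at hh; exact hh.1
    · intro hh; rw [Prod.mk.injEq]; exact ⟨hh, h _ _ hh⟩
  have := cmi_nonneg hμ0 f B f'
  rw [hcongr] at hchain
  linarith


lemma pm_le_total {μ : Ω → ℝ} (hμ0 : ∀ ω, 0 ≤ μ ω) (f : Ω → α) (s : α) :
    pm μ f s ≤ ∑ ω, μ ω := by
  unfold pm
  exact Finset.sum_le_sum_of_subset_of_nonneg (Finset.filter_subset _ _) (fun ω _ _ => hμ0 ω)

lemma pm_split' (μ : Ω → ℝ) (f : Ω → α) (g : Ω → β) (t : Finset β) (ht : ∀ ω, g ω ∈ t) (s : α) :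
    ∑ x ∈ t, pm μ (fun ω => (f ω, g ω)) (s, x) = pm μ f s := by
  rw [← pm_split μ f g t ht s]
  exact Finset.sum_congr rfl fun x _ =>
    pm_ext (fun ω => by simp only [Prod.mk.injEq]; tauto)

section Capacity

variable {𝒲 𝒱 : Type*} [Fintype 𝒲] [Fintype 𝒱] [DecidableEq 𝒲] [DecidableEq 𝒱]
  {Γ : 𝒲 → 𝒱 → ℝ}

lemma Γ_le_one (hΓ0 : ∀ w v, 0 ≤ Γ w v) (hΓ1 : ∀ w, ∑ v, Γ w v = 1) (w : 𝒲) (v : 𝒱) :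
    Γ w v ≤ 1 := by
  rw [← hΓ1 w]
  exact Finset.single_le_sum (fun v _ => hΓ0 w v) (Finset.mem_univ v)

lemma neg_mul_logb_le {x : ℝ} (hx : 0 < x) (hx1 : x ≤ 1) : -(x * Real.logb 2 x) ≤ 2 := by
  have hlog2 : (0.6931471803 : ℝ) < Real.log 2 := Real.log_two_gt_d9
  have h1 : Real.log x⁻¹ ≤ x⁻¹ - 1 := Real.log_le_sub_one_of_pos (by positivity)
  have h2 : -(x * Real.log x) = x * Real.log x⁻¹ := by
    rw [Real.log_inv]; ring
  have h3 : x * Real.log x⁻¹ ≤ x * (x⁻¹ - 1) := by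
    apply mul_le_mul_of_nonneg_left h1 hx.le
  have h4 : x * (x⁻¹ - 1) = 1 - x := by field_simp
  have h5 : -(x * Real.log x) ≤ 1 := by rw [h2]; nlinarith
  unfold Real.logb
  rw [div_eq_mul_inv]
  have hpos : (0:ℝ) < Real.log 2 := by linarith
  rw [show -(x * (Real.log x * (Real.log 2)⁻¹)) = -(x * Real.log x) * (Real.log 2)⁻¹ by ring]
  have hinv : (Real.log 2)⁻¹ ≤ 2 := by
    rw [inv_le_iff_one_le_mul₀ hpos]
    linarith
  calc -(x * Real.log x) * (Real.log 2)⁻¹ ≤ 1 * (Real.log 2)⁻¹ := by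
        apply mul_le_mul_of_nonneg_right h5 (by positivity)
    _ ≤ 2 := by rw [one_mul]; exact hinv

lemma capacity_bddAbove (hΓ0 : ∀ w v, 0 ≤ Γ w v) (hΓ1 : ∀ w, ∑ v, Γ w v = 1) :
    BddAbove {r : ℝ | ∃ p : 𝒲 → ℝ, (∀ w, 0 ≤ p w) ∧ (∑ w, p w = 1) ∧
      r = ∑ w, ∑ v, if p w * Γ w v = 0 then 0 else
        p w * Γ w v * Real.logb 2 (Γ w v / (∑ w', p w' * Γ w' v))} := by
  use (Fintype.card 𝒲) * ((Fintype.card 𝒱) * 2)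
  rintro r ⟨p, hp0, hp1, rfl⟩
  calc ∑ w, ∑ v, (if p w * Γ w v = 0 then 0 else
        p w * Γ w v * Real.logb 2 (Γ w v / (∑ w', p w' * Γ w' v)))
      ≤ ∑ w : 𝒲, ∑ v : 𝒱, (2:ℝ) := by
        apply Finset.sum_le_sum; intro w _
        apply Finset.sum_le_sum; intro v _
        by_cases h : p w * Γ w v = 0
        · rw [if_pos h]; norm_num
        · rw [if_neg h]
          have hpw : 0 < p w := lt_of_le_of_ne (hp0 w) (fun he => h (by rw [← he]; ring))
          have hΓv : 0 < Γ w v := lt_of_le_of_ne (hΓ0 w v) (fun he => h (by rw [← he]; ring))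
          have hx : 0 < p w * Γ w v := mul_pos hpw hΓv
          have hq : p w * Γ w v ≤ ∑ w', p w' * Γ w' v :=
            Finset.single_le_sum (fun w' _ => mul_nonneg (hp0 w') (hΓ0 w' v)) (Finset.mem_univ w)
          have harg : Γ w v / (∑ w', p w' * Γ w' v) ≤ (p w * Γ w v)⁻¹ := by
            rw [div_le_iff₀ (lt_of_lt_of_le hx hq)]
            rw [inv_mul_eq_div, le_div_iff₀ hx]
            calc Γ w v * (p w * Γ w v) ≤ Γ w v * (∑ w', p w' * Γ w' v) :=
                  mul_le_mul_of_nonneg_left hq (hΓ0 w v)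
              _ ≤ 1 * (∑ w', p w' * Γ w' v) :=
                  mul_le_mul_of_nonneg_right (Γ_le_one hΓ0 hΓ1 w v) (le_trans hx.le hq)
              _ = ∑ w', p w' * Γ w' v := one_mul _
          have hx1 : p w * Γ w v ≤ 1 := by
            have hpw1 : p w ≤ 1 := by
              rw [← hp1]
              exact Finset.single_le_sum (fun w' _ => hp0 w') (Finset.mem_univ w)
            have := Γ_le_one hΓ0 hΓ1 w v
            nlinarith
          have hlog : Real.logb 2 (Γ w v / (∑ w', p w' * Γ w' v))
              ≤ Real.logb 2 (p w * Γ w v)⁻¹ := by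
            apply Real.logb_le_logb_of_le (by norm_num) _ harg
            apply div_pos hΓv (lt_of_lt_of_le hx hq)
          calc p w * Γ w v * Real.logb 2 (Γ w v / (∑ w', p w' * Γ w' v))
              ≤ p w * Γ w v * Real.logb 2 (p w * Γ w v)⁻¹ :=
                mul_le_mul_of_nonneg_left hlog hx.le
            _ = -(p w * Γ w v * Real.logb 2 (p w * Γ w v)) := by
                rw [Real.logb, Real.logb, Real.log_inv]; ring
            _ ≤ 2 := neg_mul_logb_le hx hx1
    _ = (Fintype.card 𝒲) * ((Fintype.card 𝒱) * 2) := by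
        simp [Finset.sum_const, Finset.card_univ, mul_assoc]

lemma klog {u v : ℝ} (hu : 0 ≤ u) (hv : 0 ≤ v) (h : u ≠ 0 → 0 < v) :
    (u - v) / Real.log 2 ≤ u * Real.logb 2 (u / v) := by
  have hlog2 : 0 < Real.log 2 := Real.log_pos (by norm_num)
  rcases eq_or_lt_of_le hu with rfl | hu'
  · simp only [zero_sub, zero_mul]
    apply div_nonpos_of_nonpos_of_nonneg (by linarith) hlog2.le
  · have hv' : 0 < v := h (ne_of_gt hu')
    have key : Real.log (v / u) ≤ v / u - 1 := Real.log_le_sub_one_of_pos (by positivity)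
    have hlogdiv : Real.log (v / u) = -Real.log (u / v) := by
      rw [← Real.log_inv]
      congr 1
      field_simp
    rw [hlogdiv] at key
    have hmain : u - v ≤ u * Real.log (u / v) := by
      have := mul_le_mul_of_nonneg_left key hu'.le
      have hid : u * (v / u - 1) = v - u := by field_simp
      nlinarith
    have hrb : u * Real.logb 2 (u / v) = u * Real.log (u / v) / Real.log 2 := by
      rw [Real.logb]; ring
    rw [hrb]
    exact div_le_div_of_nonneg_right hmain hlog2.le


section FiberCtx

variable {Ω : Type*} [Fintype Ω] {𝒳v : Type*} [DecidableEq 𝒳v]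

lemma fiber_bound (hΓ0 : ∀ w v, 0 ≤ Γ w v) (hΓ1 : ∀ w, ∑ v, Γ w v = 1)
    (ν : Ω → ℝ) (hν0 : ∀ ω, 0 ≤ ν ω)
    (A : Ω → 𝒱) (B : Ω → 𝒳v) (Wf : Ω → 𝒲)
    (hch : ∀ w a b, pm ν (fun ω => (Wf ω, (A ω, B ω))) (w, (a, b))
        = Γ w a * pm ν (fun ω => (Wf ω, B ω)) (w, b)) :
    ∑ a : 𝒱, ∑ b ∈ Finset.univ.image B,
      pm ν (fun ω => (A ω, B ω)) (a, b) *
        (Real.logb 2 (pm ν (fun ω => (A ω, B ω)) (a, b)) + Real.logb 2 (∑ ω, ν ω)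
          - Real.logb 2 (pm ν A a) - Real.logb 2 (pm ν B b))
      ≤ capacity Γ * ∑ ω, ν ω := by
  classical
  set Sb : Finset 𝒳v := Finset.univ.image B with hSb
  have hSbmem : ∀ ω, B ω ∈ Sb := fun ω => Finset.mem_image_of_mem B (Finset.mem_univ ω)
  -- abbreviations, as equations
  have hg0 : ∀ w b, 0 ≤ pm ν (fun ω => (Wf ω, B ω)) (w, b) := fun w b => pm_nonneg hν0 _ _
  have hp0 : ∀ w, 0 ≤ pm ν Wf w := fun w => pm_nonneg hν0 _ _
  have hp_eq : ∀ w, pm ν Wf w = ∑ b ∈ Sb, pm ν (fun ω => (Wf ω, B ω)) (w, b) :=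
    fun w => (pm_split' ν Wf B Sb hSbmem w).symm
  have hAB : ∀ a b, pm ν (fun ω => (A ω, B ω)) (a, b)
      = ∑ w, Γ w a * pm ν (fun ω => (Wf ω, B ω)) (w, b) := by
    intro a b
    rw [← pm_split ν (fun ω => (A ω, B ω)) Wf Finset.univ (fun ω => Finset.mem_univ _) (a, b)]
    exact Finset.sum_congr rfl fun w _ => hch w a b
  have hpA : ∀ a, pm ν A a = ∑ w, Γ w a * pm ν Wf w := by
    intro a
    rw [← pm_split' ν A B Sb hSbmem a]
    calc ∑ b ∈ Sb, pm ν (fun ω => (A ω, B ω)) (a, b)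
        = ∑ b ∈ Sb, ∑ w, Γ w a * pm ν (fun ω => (Wf ω, B ω)) (w, b) :=
          Finset.sum_congr rfl fun b _ => hAB a b
      _ = ∑ w, ∑ b ∈ Sb, Γ w a * pm ν (fun ω => (Wf ω, B ω)) (w, b) := Finset.sum_comm
      _ = ∑ w, Γ w a * pm ν Wf w := by
          apply Finset.sum_congr rfl
          intro w _
          rw [← Finset.mul_sum, ← hp_eq w]
  have hpB : ∀ b, pm ν B b = ∑ w, pm ν (fun ω => (Wf ω, B ω)) (w, b) :=
    fun b => (pm_split ν B Wf Finset.univ (fun ω => Finset.mem_univ _) b).symm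
  have hpBA : ∀ b, ∑ a, pm ν (fun ω => (A ω, B ω)) (a, b) = pm ν B b := by
    intro b
    exact pm_split ν B A Finset.univ (fun ω => Finset.mem_univ _) b
  have hm_p : ∑ w, pm ν Wf w = ∑ ω, ν ω :=
    sum_pm ν Wf Finset.univ (fun ω => Finset.mem_univ _)
  have hm_B : ∑ b ∈ Sb, pm ν B b = ∑ ω, ν ω := sum_pm ν B Sb hSbmem
  have hm0 : 0 ≤ ∑ ω, ν ω := Finset.sum_nonneg (fun ω _ => hν0 ω)
  by_cases hm : ∑ ω, ν ω = 0
  · -- degenerate case: all masses vanish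
    have hz : ∀ a b, pm ν (fun ω => (A ω, B ω)) (a, b) = 0 := by
      intro a b
      have h1 := pm_le_total hν0 (fun ω => (A ω, B ω)) (a, b)
      have h2 := pm_nonneg hν0 (fun ω => (A ω, B ω)) (a, b)
      linarith [hm ▸ h1]
    calc ∑ a : 𝒱, ∑ b ∈ Sb, pm ν (fun ω => (A ω, B ω)) (a, b) *
          (Real.logb 2 (pm ν (fun ω => (A ω, B ω)) (a, b)) + Real.logb 2 (∑ ω, ν ω)
            - Real.logb 2 (pm ν A a) - Real.logb 2 (pm ν B b))
        = 0 := by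
          apply Finset.sum_eq_zero; intro a _
          apply Finset.sum_eq_zero; intro b _
          rw [hz a b]; ring
      _ ≤ capacity Γ * ∑ ω, ν ω := by rw [hm, mul_zero]
  have hmpos : 0 < ∑ ω, ν ω := lt_of_le_of_ne hm0 (Ne.symm hm)
  -- the capacity-shaped sum
  set S1 : ℝ := ∑ w, ∑ a, (if pm ν Wf w * Γ w a = 0 then 0 else
      pm ν Wf w * Γ w a * Real.logb 2 (Γ w a * (∑ ω, ν ω) / pm ν A a)) with hS1
  -- Step B : S1 ≤ capacity Γ * m
  have stepB : S1 ≤ capacity Γ * ∑ ω, ν ω := by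
    have hmem : S1 / (∑ ω, ν ω) ∈ {r : ℝ | ∃ p : 𝒲 → ℝ, (∀ w, 0 ≤ p w) ∧ (∑ w, p w = 1) ∧
        r = ∑ w, ∑ v, if p w * Γ w v = 0 then 0 else
          p w * Γ w v * Real.logb 2 (Γ w v / (∑ w', p w' * Γ w' v))} := by
      refine ⟨fun w => pm ν Wf w / (∑ ω, ν ω), fun w => div_nonneg (hp0 w) hm0, ?_, ?_⟩
      · rw [← Finset.sum_div, hm_p, div_self hm]
      · rw [hS1, Finset.sum_div]
        apply Finset.sum_congr rfl
        intro w _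
        rw [Finset.sum_div]
        apply Finset.sum_congr rfl
        intro a _
        have hqeq : (∑ w', pm ν Wf w' / (∑ ω, ν ω) * Γ w' a) = pm ν A a / (∑ ω, ν ω) := by
          rw [hpA a, Finset.sum_div]
          apply Finset.sum_congr rfl
          intro w' _
          rw [mul_comm (Γ w' a) (pm ν Wf w')]
          ring
        rw [hqeq]
        have hififf : pm ν Wf w / (∑ ω, ν ω) * Γ w a = 0 ↔ pm ν Wf w * Γ w a = 0 := by
          rw [div_mul_eq_mul_div, div_eq_zero_iff]
          constructor
          · rintro (h | h); exacts [h, absurd h hm]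
          · intro h; exact Or.inl h
        by_cases hc : pm ν Wf w * Γ w a = 0
        · rw [if_pos hc, if_pos (hififf.2 hc)]
          simp
        · rw [if_neg hc, if_neg (fun hx => hc (hififf.1 hx))]
          rw [div_div_eq_mul_div]
          field_simp
    have hrle := le_csSup (capacity_bddAbove hΓ0 hΓ1) hmem
    have : S1 / (∑ ω, ν ω) ≤ capacity Γ := hrle
    calc S1 = (S1 / (∑ ω, ν ω)) * (∑ ω, ν ω) := by field_simp
      _ ≤ capacity Γ * ∑ ω, ν ω := mul_le_mul_of_nonneg_right this hm0
  -- Step A : LHS ≤ S1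
  have claim1 : S1 = ∑ w, ∑ a, ∑ b ∈ Sb,
      Γ w a * pm ν (fun ω => (Wf ω, B ω)) (w, b)
        * Real.logb 2 (Γ w a * (∑ ω, ν ω) / pm ν A a) := by
    rw [hS1]
    apply Finset.sum_congr rfl
    intro w _
    apply Finset.sum_congr rfl
    intro a _
    have hinner : ∑ b ∈ Sb, Γ w a * pm ν (fun ω => (Wf ω, B ω)) (w, b)
        * Real.logb 2 (Γ w a * (∑ ω, ν ω) / pm ν A a)
        = Γ w a * pm ν Wf w * Real.logb 2 (Γ w a * (∑ ω, ν ω) / pm ν A a) := by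
      rw [← Finset.sum_mul, ← Finset.mul_sum, ← hp_eq w]
    rw [hinner]
    by_cases hc : pm ν Wf w * Γ w a = 0
    · rw [if_pos hc]
      have : Γ w a * pm ν Wf w = 0 := by rw [mul_comm]; exact hc
      rw [this, zero_mul]
    · rw [if_neg hc]; ring
  have claim2 : ∑ a : 𝒱, ∑ b ∈ Sb,
      pm ν (fun ω => (A ω, B ω)) (a, b) *
        (Real.logb 2 (pm ν (fun ω => (A ω, B ω)) (a, b)) + Real.logb 2 (∑ ω, ν ω)
          - Real.logb 2 (pm ν A a) - Real.logb 2 (pm ν B b))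
      = ∑ w, ∑ a, ∑ b ∈ Sb, Γ w a * pm ν (fun ω => (Wf ω, B ω)) (w, b)
          * Real.logb 2 (pm ν (fun ω => (A ω, B ω)) (a, b) * (∑ ω, ν ω)
              / (pm ν A a * pm ν B b)) := by
    have hcomm : ∑ w, ∑ a : 𝒱, ∑ b ∈ Sb, (Γ w a * pm ν (fun ω => (Wf ω, B ω)) (w, b)
          * Real.logb 2 (pm ν (fun ω => (A ω, B ω)) (a, b) * (∑ ω, ν ω)
              / (pm ν A a * pm ν B b)))
        = ∑ a : 𝒱, ∑ b ∈ Sb, ∑ w, (Γ w a * pm ν (fun ω => (Wf ω, B ω)) (w, b)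
          * Real.logb 2 (pm ν (fun ω => (A ω, B ω)) (a, b) * (∑ ω, ν ω)
              / (pm ν A a * pm ν B b))) := by
      rw [Finset.sum_comm]
      exact Finset.sum_congr rfl fun a _ => Finset.sum_comm
    rw [hcomm]
    apply Finset.sum_congr rfl
    intro a _
    apply Finset.sum_congr rfl
    intro b hb
    rw [← Finset.sum_mul, ← hAB a b]
    by_cases hc : pm ν (fun ω => (A ω, B ω)) (a, b) = 0
    · rw [hc]; ring
    · have hpAB : 0 < pm ν (fun ω => (A ω, B ω)) (a, b) :=
        lt_of_le_of_ne (pm_nonneg hν0 _ _) (Ne.symm hc)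
      have h1 : pm ν (fun ω => (A ω, B ω)) (a, b) ≤ pm ν A a :=
        pm_le hν0 (fun ω hh => by rw [Prod.mk.injEq] at hh; exact hh.1)
      have h2 : pm ν (fun ω => (A ω, B ω)) (a, b) ≤ pm ν B b :=
        pm_le hν0 (fun ω hh => by rw [Prod.mk.injEq] at hh; exact hh.2)
      have hpApos : 0 < pm ν A a := lt_of_lt_of_le hpAB h1
      have hpBpos : 0 < pm ν B b := lt_of_lt_of_le hpAB h2
      have hcombine : Real.logb 2 (pm ν (fun ω => (A ω, B ω)) (a, b) * (∑ ω, ν ω)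
            / (pm ν A a * pm ν B b))
          = Real.logb 2 (pm ν (fun ω => (A ω, B ω)) (a, b)) + Real.logb 2 (∑ ω, ν ω)
            - Real.logb 2 (pm ν A a) - Real.logb 2 (pm ν B b) := by
        rw [Real.logb_div (by positivity) (by positivity),
          Real.logb_mul (ne_of_gt hpAB) (ne_of_gt hmpos),
          Real.logb_mul (ne_of_gt hpApos) (ne_of_gt hpBpos)]
        ring
      rw [hcombine]
  -- termwise comparison
  have hterm : ∀ w, ∀ a : 𝒱, ∀ b ∈ Sb,
      (Γ w a * pm ν (fun ω => (Wf ω, B ω)) (w, b)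
          - pm ν (fun ω => (A ω, B ω)) (a, b) * pm ν (fun ω => (Wf ω, B ω)) (w, b) / pm ν B b)
        / Real.log 2
      ≤ Γ w a * pm ν (fun ω => (Wf ω, B ω)) (w, b)
          * Real.logb 2 (Γ w a * (∑ ω, ν ω) / pm ν A a)
        - Γ w a * pm ν (fun ω => (Wf ω, B ω)) (w, b)
          * Real.logb 2 (pm ν (fun ω => (A ω, B ω)) (a, b) * (∑ ω, ν ω)
              / (pm ν A a * pm ν B b)) := by
    intro w a b _
    by_cases hu : Γ w a * pm ν (fun ω => (Wf ω, B ω)) (w, b) = 0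
    · rw [hu]
      simp only [zero_mul, sub_zero, zero_sub]
      apply div_nonpos_of_nonpos_of_nonneg _ (Real.log_pos (by norm_num)).le
      have : 0 ≤ pm ν (fun ω => (A ω, B ω)) (a, b) * pm ν (fun ω => (Wf ω, B ω)) (w, b)
          / pm ν B b :=
        div_nonneg (mul_nonneg (pm_nonneg hν0 _ _) (pm_nonneg hν0 _ _)) (pm_nonneg hν0 _ _)
      linarith
    · have hupos : 0 < Γ w a * pm ν (fun ω => (Wf ω, B ω)) (w, b) :=
        lt_of_le_of_ne (mul_nonneg (hΓ0 w a) (hg0 w b)) (Ne.symm hu)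
      have hΓpos : 0 < Γ w a :=
        lt_of_le_of_ne (hΓ0 w a) (fun he => hu (by rw [← he]; ring))
      have hgpos : 0 < pm ν (fun ω => (Wf ω, B ω)) (w, b) := by
        rcases (mul_pos_iff.1 hupos) with ⟨_, h⟩ | ⟨h, _⟩
        · exact h
        · linarith [hΓ0 w a]
      have hpABpos : 0 < pm ν (fun ω => (A ω, B ω)) (a, b) := by
        apply lt_of_lt_of_le hupos
        rw [hAB a b]
        exact Finset.single_le_sum (fun w' _ => mul_nonneg (hΓ0 w' a) (hg0 w' b))
          (Finset.mem_univ w)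
      have hpBpos : 0 < pm ν B b := by
        apply lt_of_lt_of_le hgpos
        exact pm_le hν0 (fun ω hh => by rw [Prod.mk.injEq] at hh; exact hh.2)
      have hpApos : 0 < pm ν A a := by
        apply lt_of_lt_of_le hpABpos
        exact pm_le hν0 (fun ω hh => by rw [Prod.mk.injEq] at hh; exact hh.1)
      have hvpos : 0 < pm ν (fun ω => (A ω, B ω)) (a, b) * pm ν (fun ω => (Wf ω, B ω)) (w, b)
          / pm ν B b := by positivity
      have hdiff : Real.logb 2 (Γ w a * (∑ ω, ν ω) / pm ν A a)
            - Real.logb 2 (pm ν (fun ω => (A ω, B ω)) (a, b) * (∑ ω, ν ω)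
                / (pm ν A a * pm ν B b))
          = Real.logb 2 ((Γ w a * pm ν (fun ω => (Wf ω, B ω)) (w, b))
              / (pm ν (fun ω => (A ω, B ω)) (a, b) * pm ν (fun ω => (Wf ω, B ω)) (w, b)
                  / pm ν B b)) := by
        rw [← Real.logb_div (by positivity) (by positivity)]
        congr 1
        field_simp
      have hklog := klog hupos.le hvpos.le (fun _ => hvpos)
      calc (Γ w a * pm ν (fun ω => (Wf ω, B ω)) (w, b)
            - pm ν (fun ω => (A ω, B ω)) (a, b) * pm ν (fun ω => (Wf ω, B ω)) (w, b)
              / pm ν B b) / Real.log 2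
          ≤ Γ w a * pm ν (fun ω => (Wf ω, B ω)) (w, b)
            * Real.logb 2 ((Γ w a * pm ν (fun ω => (Wf ω, B ω)) (w, b))
              / (pm ν (fun ω => (A ω, B ω)) (a, b) * pm ν (fun ω => (Wf ω, B ω)) (w, b)
                  / pm ν B b)) := hklog
        _ = _ := by rw [← hdiff]; ring
  have hsum_u : ∑ w, ∑ a : 𝒱, ∑ b ∈ Sb, Γ w a * pm ν (fun ω => (Wf ω, B ω)) (w, b)
      = ∑ ω, ν ω := by
    rw [← hm_p]
    apply Finset.sum_congr rfl
    intro w _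
    calc ∑ a : 𝒱, ∑ b ∈ Sb, Γ w a * pm ν (fun ω => (Wf ω, B ω)) (w, b)
        = ∑ a : 𝒱, Γ w a * pm ν Wf w := by
          apply Finset.sum_congr rfl
          intro a _
          rw [← Finset.mul_sum, ← hp_eq w]
      _ = pm ν Wf w := by rw [← Finset.sum_mul, hΓ1 w, one_mul]
  have hsum_v : ∑ w, ∑ a : 𝒱, ∑ b ∈ Sb,
      pm ν (fun ω => (A ω, B ω)) (a, b) * pm ν (fun ω => (Wf ω, B ω)) (w, b) / pm ν B b
      = ∑ ω, ν ω := by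
    have hcomm2 : ∑ w, ∑ a : 𝒱, ∑ b ∈ Sb,
        (pm ν (fun ω => (A ω, B ω)) (a, b) * pm ν (fun ω => (Wf ω, B ω)) (w, b) / pm ν B b)
        = ∑ b ∈ Sb, ∑ w, ∑ a : 𝒱,
        (pm ν (fun ω => (A ω, B ω)) (a, b) * pm ν (fun ω => (Wf ω, B ω)) (w, b) / pm ν B b) := by
      rw [show ∀ (f : 𝒲 → 𝒱 → 𝒳v → ℝ), (∑ w, ∑ a : 𝒱, ∑ b ∈ Sb, f w a b)
          = ∑ w, ∑ b ∈ Sb, ∑ a : 𝒱, f w a b from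
        fun f => Finset.sum_congr rfl fun w _ => Finset.sum_comm]
      exact Finset.sum_comm
    rw [hcomm2, ← hm_B]
    apply Finset.sum_congr rfl
    intro b hb
    by_cases hpb : pm ν B b = 0
    · have hgz : ∀ w, pm ν (fun ω => (Wf ω, B ω)) (w, b) = 0 := by
        intro w
        have hle : pm ν (fun ω => (Wf ω, B ω)) (w, b) ≤ pm ν B b :=
          pm_le hν0 (fun ω hh => by rw [Prod.mk.injEq] at hh; exact hh.2)
        linarith [hg0 w b, hpb ▸ hle]
      rw [hpb]
      apply Finset.sum_eq_zero
      intro w _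
      apply Finset.sum_eq_zero
      intro a _
      rw [hgz w]
      simp
    · calc ∑ w, ∑ a : 𝒱,
          (pm ν (fun ω => (A ω, B ω)) (a, b) * pm ν (fun ω => (Wf ω, B ω)) (w, b) / pm ν B b)
          = ∑ w, pm ν (fun ω => (Wf ω, B ω)) (w, b) := by
            apply Finset.sum_congr rfl
            intro w _
            rw [show ∀ x : 𝒱 → ℝ, (∑ a, x a) = ∑ a, x a from fun _ => rfl]
            have : ∀ a : 𝒱, pm ν (fun ω => (A ω, B ω)) (a, b)
                * pm ν (fun ω => (Wf ω, B ω)) (w, b) / pm ν B b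
                = pm ν (fun ω => (A ω, B ω)) (a, b)
                  * (pm ν (fun ω => (Wf ω, B ω)) (w, b) / pm ν B b) := by
              intro a; ring
            rw [Finset.sum_congr rfl (fun a _ => this a), ← Finset.sum_mul, hpBA b,
              mul_div_assoc', mul_comm, mul_div_assoc, div_self hpb, mul_one]
        _ = pm ν B b := (hpB b).symm
  -- put the pieces together
  have hts : ∑ w, ∑ a : 𝒱, ∑ b ∈ Sb,
      ((Γ w a * pm ν (fun ω => (Wf ω, B ω)) (w, b)
        - pm ν (fun ω => (A ω, B ω)) (a, b) * pm ν (fun ω => (Wf ω, B ω)) (w, b) / pm ν B b)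
        / Real.log 2)
      ≤ ∑ w, ∑ a : 𝒱, ∑ b ∈ Sb,
      (Γ w a * pm ν (fun ω => (Wf ω, B ω)) (w, b)
          * Real.logb 2 (Γ w a * (∑ ω, ν ω) / pm ν A a)
        - Γ w a * pm ν (fun ω => (Wf ω, B ω)) (w, b)
          * Real.logb 2 (pm ν (fun ω => (A ω, B ω)) (a, b) * (∑ ω, ν ω)
              / (pm ν A a * pm ν B b))) := by
    apply Finset.sum_le_sum
    intro w _
    apply Finset.sum_le_sum
    intro a _
    apply Finset.sum_le_sum
    intro b hb
    exact hterm w a b hb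
  have hlhs0 : ∑ w, ∑ a : 𝒱, ∑ b ∈ Sb,
      ((Γ w a * pm ν (fun ω => (Wf ω, B ω)) (w, b)
        - pm ν (fun ω => (A ω, B ω)) (a, b) * pm ν (fun ω => (Wf ω, B ω)) (w, b) / pm ν B b)
        / Real.log 2) = 0 := by
    simp only [← Finset.sum_div, Finset.sum_sub_distrib]
    rw [hsum_u, hsum_v, sub_self, zero_div]
  rw [hlhs0] at hts
  simp only [Finset.sum_sub_distrib] at hts
  rw [claim2]
  calc ∑ w, ∑ a : 𝒱, ∑ b ∈ Sb, Γ w a * pm ν (fun ω => (Wf ω, B ω)) (w, b)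
          * Real.logb 2 (pm ν (fun ω => (A ω, B ω)) (a, b) * (∑ ω, ν ω)
              / (pm ν A a * pm ν B b))
      ≤ ∑ w, ∑ a : 𝒱, ∑ b ∈ Sb, Γ w a * pm ν (fun ω => (Wf ω, B ω)) (w, b)
          * Real.logb 2 (Γ w a * (∑ ω, ν ω) / pm ν A a) := by linarith
    _ = S1 := claim1.symm
    _ ≤ capacity Γ * ∑ ω, ν ω := stepB


/-- restricting the measure to the fiber `{U = u}`. -/
lemma pm_cond (μ : Ω → ℝ) {γ S : Type*} [DecidableEq γ] [DecidableEq S]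
    (U : Ω → γ) (u : γ) (f : Ω → S) (s : S) :
    pm (fun ω => if U ω = u then μ ω else 0) f s
      = pm μ (fun ω => (f ω, U ω)) (s, u) := by
  unfold pm
  rw [Finset.sum_filter, Finset.sum_filter]
  apply Finset.sum_congr rfl
  intro ω _
  by_cases h1 : f ω = s <;> by_cases h2 : U ω = u <;>
    simp [h1, h2, Prod.mk.injEq]

lemma sum_cond (μ : Ω → ℝ) {γ : Type*} [DecidableEq γ] (U : Ω → γ) (u : γ) :
    ∑ ω, (if U ω = u then μ ω else 0) = pm μ U u := by
  unfold pm
  rw [Finset.sum_filter]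

lemma cmi_channel {γ : Type*} [DecidableEq γ] {𝒳v : Type*} [DecidableEq 𝒳v]
    {μ : Ω → ℝ} (hμ0 : ∀ ω, 0 ≤ μ ω)
    (hΓ0 : ∀ w v, 0 ≤ Γ w v) (hΓ1 : ∀ w, ∑ v, Γ w v = 1)
    (A : Ω → 𝒱) (B : Ω → 𝒳v) (U : Ω → γ) (E : γ → Prop)
    (hconst : ∀ u, ¬ E u → ∀ ω ω', U ω = u → U ω' = u → A ω = A ω')
    (hchan : ∀ u, E u → ∃ Wf : Ω → 𝒲, ∀ w a b,
      pm (fun ω => if U ω = u then μ ω else 0) (fun ω => (Wf ω, (A ω, B ω))) (w, (a, b))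
        = Γ w a * pm (fun ω => if U ω = u then μ ω else 0) (fun ω => (Wf ω, B ω)) (w, b)) :
    cmi μ A B U ≤ capacity Γ * ∑ u ∈ (Finset.univ.image U).filter E, pm μ U u := by
  classical
  rw [cmi_eq]
  set T : Ω → 𝒱 × (𝒳v × γ) := fun ω => (A ω, (B ω, U ω)) with hT
  set term : 𝒱 × (𝒳v × γ) → ℝ := fun t => pm μ T t *
      (Real.logb 2 (pm μ T t) + Real.logb 2 (pm μ U t.2.2)
        - Real.logb 2 (pm μ (fun ω => (A ω, U ω)) (t.1, t.2.2))
        - Real.logb 2 (pm μ (fun ω => (B ω, U ω)) t.2)) with hterm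
  have hpart : ∑ t ∈ Finset.univ.image T, term t
      = ∑ u ∈ Finset.univ.image U,
          ∑ t ∈ (Finset.univ.image T).filter (fun t => t.2.2 = u), term t := by
    rw [Finset.sum_fiberwise_of_maps_to (g := fun t => t.2.2) ?_ term]
    intro t ht
    rcases Finset.mem_image.1 ht with ⟨ω, _, rfl⟩
    exact Finset.mem_image_of_mem U (Finset.mem_univ ω)
  rw [hpart]
  have hbound : ∀ u ∈ Finset.univ.image U,
      ∑ t ∈ (Finset.univ.image T).filter (fun t => t.2.2 = u), term t
        ≤ (if E u then capacity Γ * pm μ U u else 0) := by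
    intro u hu
    by_cases hE : E u
    · -- channel case
      rw [if_pos hE]
      obtain ⟨Wf, hWf⟩ := hchan u hE
      set ν : Ω → ℝ := fun ω => if U ω = u then μ ω else 0 with hν
      have hν0 : ∀ ω, 0 ≤ ν ω := by
        intro ω
        by_cases h : U ω = u <;> simp [hν, h, hμ0 ω]
      have htot : ∑ ω, ν ω = pm μ U u := sum_cond μ U u
      have htr1 : ∀ a b, pm μ T (a, (b, u)) = pm ν (fun ω => (A ω, B ω)) (a, b) := by
        intro a b
        rw [pm_cond μ U u (fun ω => (A ω, B ω)) (a, b)]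
        apply pm_ext
        intro ω
        simp only [hT, Prod.mk.injEq]
        tauto
      have htr2 : ∀ a, pm μ (fun ω => (A ω, U ω)) (a, u) = pm ν A a := by
        intro a; rw [pm_cond μ U u A a]
      have htr3 : ∀ b, pm μ (fun ω => (B ω, U ω)) (b, u) = pm ν B b := by
        intro b; rw [pm_cond μ U u B b]
      set G : 𝒱 × 𝒳v → ℝ := fun y => pm ν (fun ω => (A ω, B ω)) y *
          (Real.logb 2 (pm ν (fun ω => (A ω, B ω)) y) + Real.logb 2 (∑ ω, ν ω)
            - Real.logb 2 (pm ν A y.1) - Real.logb 2 (pm ν B y.2)) with hG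
      have hGsum : ∑ t ∈ (Finset.univ.image T).filter (fun t => t.2.2 = u), term t
          = ∑ t ∈ (Finset.univ.image T).filter (fun t => t.2.2 = u), G (t.1, t.2.1) := by
        apply Finset.sum_congr rfl
        intro t ht
        rcases Finset.mem_filter.1 ht with ⟨_, htu⟩
        obtain ⟨a, b, u'⟩ := t
        have hu' : u' = u := htu
        rw [hu']
        rw [hterm, hG]
        dsimp only
        rw [htr1 a b, htr2 a, htr3 b, ← htot]
      have hinj : ∀ x ∈ (Finset.univ.image T).filter (fun t => t.2.2 = u),
          ∀ y ∈ (Finset.univ.image T).filter (fun t => t.2.2 = u),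
          (fun t : 𝒱 × (𝒳v × γ) => (t.1, t.2.1)) x = (fun t : 𝒱 × (𝒳v × γ) => (t.1, t.2.1)) y
            → x = y := by
        intro x hx y hy hxy
        rcases Finset.mem_filter.1 hx with ⟨_, hxu⟩
        rcases Finset.mem_filter.1 hy with ⟨_, hyu⟩
        obtain ⟨a1, b1, u1⟩ := x
        obtain ⟨a2, b2, u2⟩ := y
        simp only [Prod.mk.injEq] at hxy ⊢
        have h1 : u1 = u := hxu
        have h2 : u2 = u := hyu
        exact ⟨hxy.1, hxy.2, h1.trans h2.symm⟩
      have himg : ∑ t ∈ (Finset.univ.image T).filter (fun t => t.2.2 = u), G (t.1, t.2.1)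
          = ∑ y ∈ ((Finset.univ.image T).filter (fun t => t.2.2 = u)).image
              (fun t : 𝒱 × (𝒳v × γ) => (t.1, t.2.1)), G y :=
        (Finset.sum_image hinj).symm
      have hsub : ((Finset.univ.image T).filter (fun t => t.2.2 = u)).image
            (fun t : 𝒱 × (𝒳v × γ) => (t.1, t.2.1))
          ⊆ Finset.univ ×ˢ Finset.univ.image B := by
        intro y hy
        rcases Finset.mem_image.1 hy with ⟨t, ht, rfl⟩
        rcases Finset.mem_filter.1 ht with ⟨htim, _⟩
        rcases Finset.mem_image.1 htim with ⟨ω, _, rfl⟩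
        exact Finset.mem_product.2 ⟨Finset.mem_univ _,
          Finset.mem_image_of_mem B (Finset.mem_univ ω)⟩
      have hzero : ∀ y ∈ Finset.univ ×ˢ Finset.univ.image B,
          y ∉ ((Finset.univ.image T).filter (fun t => t.2.2 = u)).image
            (fun t : 𝒱 × (𝒳v × γ) => (t.1, t.2.1)) → G y = 0 := by
        intro y _ hnot
        have hz : pm ν (fun ω => (A ω, B ω)) y = 0 := by
          by_contra hz
          rw [pm] at hz
          obtain ⟨ω, hωmem, hων⟩ := Finset.exists_ne_zero_of_sum_ne_zero hz
          have hUω : U ω = u := by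
            by_contra h
            apply hων
            simp [hν, h]
          have hAB : (A ω, B ω) = y := by
            have := (Finset.mem_filter.1 hωmem).2
            rw [← this]
          apply hnot
          apply Finset.mem_image.2
          refine ⟨T ω, Finset.mem_filter.2 ⟨Finset.mem_image_of_mem T (Finset.mem_univ ω), ?_⟩, ?_⟩
          · rw [hT]; exact hUω
          · rw [hT]; dsimp only; rw [← hAB]
        rw [hG]
        dsimp only
        rw [hz, zero_mul]
      have hext : ∑ y ∈ ((Finset.univ.image T).filter (fun t => t.2.2 = u)).image
            (fun t : 𝒱 × (𝒳v × γ) => (t.1, t.2.1)), G y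
          = ∑ y ∈ Finset.univ ×ˢ Finset.univ.image B, G y :=
        Finset.sum_subset hsub hzero
      have hfb : ∑ y ∈ Finset.univ ×ˢ Finset.univ.image B, G y ≤ capacity Γ * ∑ ω, ν ω := by
        rw [Finset.sum_product]
        exact fiber_bound hΓ0 hΓ1 ν hν0 A B Wf hWf
      calc ∑ t ∈ (Finset.univ.image T).filter (fun t => t.2.2 = u), term t
          = ∑ y ∈ Finset.univ ×ˢ Finset.univ.image B, G y := by rw [hGsum, himg, hext]
        _ ≤ capacity Γ * ∑ ω, ν ω := hfb
        _ = capacity Γ * pm μ U u := by rw [htot]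
    · -- constant case: each term vanishes
      rw [if_neg hE]
      have hinner : ∑ t ∈ (Finset.univ.image T).filter (fun t => t.2.2 = u), term t = 0 := by
        apply Finset.sum_eq_zero
        intro t ht
        rcases Finset.mem_filter.1 ht with ⟨htim, htu⟩
        rcases Finset.mem_image.1 htim with ⟨ω₀, _, hω₀⟩
        obtain ⟨a, b, u'⟩ := t
        have hu' : u' = u := htu
        rw [hu']
        rw [hu'] at htu hω₀
        have hA0 : A ω₀ = a := congrArg Prod.fst hω₀
        have hB0 : B ω₀ = b := congrArg Prod.fst (congrArg Prod.snd hω₀)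
        have hU0 : U ω₀ = u := congrArg Prod.snd (congrArg Prod.snd hω₀)
        have e1 : pm μ T (a, (b, u)) = pm μ (fun ω => (B ω, U ω)) (b, u) := by
          apply pm_ext
          intro ω
          rw [hT]
          simp only [Prod.mk.injEq]
          constructor
          · rintro ⟨_, h2, h3⟩; exact ⟨h2, h3⟩
          · rintro ⟨h2, h3⟩
            exact ⟨(hconst u hE ω ω₀ h3 hU0).trans hA0, h2, h3⟩
        have e2 : pm μ (fun ω => (A ω, U ω)) (a, u) = pm μ U u := by
          apply pm_ext
          intro ω
          simp only [Prod.mk.injEq]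
          constructor
          · rintro ⟨_, h2⟩; exact h2
          · intro h2
            exact ⟨(hconst u hE ω ω₀ h2 hU0).trans hA0, h2⟩
        rw [hterm]
        dsimp only
        rw [e1, e2]
        ring
      rw [hinner]
  calc ∑ u ∈ Finset.univ.image U,
        ∑ t ∈ (Finset.univ.image T).filter (fun t => t.2.2 = u), term t
      ≤ ∑ u ∈ Finset.univ.image U, (if E u then capacity Γ * pm μ U u else 0) :=
        Finset.sum_le_sum hbound
    _ = capacity Γ * ∑ u ∈ (Finset.univ.image U).filter E, pm μ U u := by
        rw [Finset.mul_sum, Finset.sum_filter]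

end FiberCtx

end Capacity

end Stmt12Aux

open Stmt12Aux

/-- Variable-length channel-output bound: if for every `i`, conditioned on `{τ > i}` and on
`(V^{i−1}, X)` (the flags `L^{i-1}` being then all one), the output `V_i` given `W_i` has law
`Γ_{V|W}` and the Markov chain `V_i → W_i → (V^{i−1}, X)` holds, then
`I(V^τ; X) ≤ H(τ) + C·E[τ]`, where `V^τ` is the variable-length output string and `C` is the
capacity of the DMC `Γ`. -/
theorem stmt12 {Ω 𝒳v 𝒲 𝒱 : Type*} [Fintype Ω] [Fintype 𝒲] [Fintype 𝒱]
    [DecidableEq 𝒳v] [DecidableEq 𝒲] [DecidableEq 𝒱]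
    (μ : Ω → ℝ) (hμ0 : ∀ ω, 0 ≤ μ ω) (hμ1 : ∑ ω, μ ω = 1)
    (τ : Ω → ℕ) (hτ : ∀ ω, 1 ≤ τ ω)
    (Xf : Ω → 𝒳v) (W : ℕ → Ω → 𝒲) (V : ℕ → Ω → 𝒱)
    (Γ : 𝒲 → 𝒱 → ℝ) (hΓ0 : ∀ w v, 0 ≤ Γ w v) (hΓ1 : ∀ w, ∑ v, Γ w v = 1)
    (hchan : ∀ (i : ℕ) (w : 𝒲) (v : 𝒱) (vp : Fin i → 𝒱) (x : 𝒳v),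
      ∑ ω ∈ Finset.univ.filter (fun ω =>
          V i ω = v ∧ W i ω = w ∧ (∀ j : Fin i, V j ω = vp j) ∧ Xf ω = x ∧ i < τ ω), μ ω
        = Γ w v * ∑ ω ∈ Finset.univ.filter (fun ω =>
            W i ω = w ∧ (∀ j : Fin i, V j ω = vp j) ∧ Xf ω = x ∧ i < τ ω), μ ω) :
    mi μ (fun ω => (List.range (τ ω)).map (fun i => V i ω)) Xf
      ≤ ent μ τ + capacity Γ * ∑ ω, μ ω * (τ ω : ℝ) := by
  classical
  have hΩ : Nonempty Ω := by
    by_contra h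
    rw [not_nonempty_iff] at h
    rw [Finset.univ_eq_empty, Finset.sum_empty] at hμ1
    exact one_ne_zero hμ1.symm
  obtain ⟨ω₀⟩ := hΩ
  set v₀ : 𝒱 := V 0 ω₀ with hv₀
  set N : ℕ := (Finset.univ.sup τ) + 1 with hN
  have hτN : ∀ ω, τ ω < N := fun ω =>
    Nat.lt_succ_of_le (Finset.le_sup (Finset.mem_univ ω))
  set Vh : ℕ → Ω → 𝒱 := fun i ω => if i < τ ω then V i ω else v₀ with hVh
  set Fl : (k : ℕ) → Ω → (Fin k → Bool) :=
    fun k ω => fun j => decide ((j : ℕ) < τ ω) with hFl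
  set P : (k : ℕ) → Ω → ((Fin k → Bool) × (Fin k → 𝒱)) :=
    fun k ω => (Fl k ω, fun j => Vh (j : ℕ) ω) with hP
  -- splitting universally quantified statements over `Fin (k+1)`
  have hsplit : ∀ (k : ℕ) (Q : ℕ → Prop),
      (∀ j : Fin (k+1), Q j.1) ↔ (Q k ∧ ∀ j : Fin k, Q j.1) := by
    intro k Q
    constructor
    · intro h
      exact ⟨h ⟨k, Nat.lt_succ_self k⟩, fun j => h ⟨j.1, Nat.lt_succ_of_lt j.2⟩⟩
    · rintro ⟨h1, h2⟩ j
      rcases Nat.lt_succ_iff_lt_or_eq.1 j.2 with h | h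
      · exact h2 ⟨j.1, h⟩
      · rw [h]; exact h1
  have hPiff : ∀ (k : ℕ) (ω ω' : Ω), P k ω = P k ω' ↔
      ((∀ j : Fin k, decide ((j:ℕ) < τ ω) = decide ((j:ℕ) < τ ω'))
        ∧ (∀ j : Fin k, Vh (j:ℕ) ω = Vh (j:ℕ) ω')) := by
    intro k ω ω'
    rw [hP]
    simp only [Prod.mk.injEq, funext_iff, hFl]
  have hFliff : ∀ (k : ℕ) (ω ω' : Ω), Fl k ω = Fl k ω' ↔
      (∀ j : Fin k, decide ((j:ℕ) < τ ω) = decide ((j:ℕ) < τ ω')) := by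
    intro k ω ω'
    rw [hFl]
    simp only [funext_iff]
  have hflagτ : ∀ ω ω', Fl N ω = Fl N ω' ↔ τ ω = τ ω' := by
    have key : ∀ ω ω', Fl N ω = Fl N ω' → τ ω ≤ τ ω' := by
      intro ω ω' h
      by_contra hlt
      push_neg at hlt
      have hj := (hFliff N ω ω').1 h ⟨τ ω', hτN ω'⟩
      simp only [decide_eq_decide] at hj
      exact absurd (hj.1 hlt) (lt_irrefl _)
    intro ω ω'
    constructor
    · intro h; exact le_antisymm (key ω ω' h) (key ω' ω h.symm)
    · intro h; rw [hFliff]; intro j; rw [h]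
  -- the main induction
  have main : ∀ k : ℕ, mi μ (P k) Xf ≤ ent μ (Fl k) + capacity Γ *
      ∑ i ∈ Finset.range k, pm μ (fun ω => decide (i < τ ω)) true := by
    intro k
    induction k with
    | zero =>
      have h1 : mi μ (P 0) Xf = 0 := by
        have hc : ∀ ω ω', P 0 ω = P 0 ω' := by
          intro ω ω'
          rw [hPiff]
          exact ⟨fun j => j.elim0, fun j => j.elim0⟩
        have h2 : ent μ (P 0) = 0 := ent_const hμ1 hc
        have h3 : ent μ (fun ω => (P 0 ω, Xf ω)) = ent μ Xf := by
          apply ent_congr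
          intro ω ω'
          simp only [Prod.mk.injEq]
          constructor
          · rintro ⟨_, h⟩; exact h
          · intro h; exact ⟨hc ω ω', h⟩
        rw [mi, h2, h3]
        ring
      have h2 : ent μ (Fl 0) = 0 := ent_const hμ1 (by
        intro ω ω'; rw [hFliff]; exact fun j => j.elim0)
      rw [h1, h2]
      simp
    | succ k ih =>
      -- recode `P (k+1)` as `((L_k, V̂_k), P k)`
      have hrec : mi μ (P (k+1)) Xf
          = mi μ (fun ω => ((decide (k < τ ω), Vh k ω), P k ω)) Xf := by
        apply mi_congr_left
        intro ω ω'
        rw [hPiff]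
        simp only [Prod.mk.injEq]
        rw [hsplit k (fun j => decide (j < τ ω) = decide (j < τ ω')),
          hsplit k (fun j => Vh j ω = Vh j ω'), hPiff]
        tauto
      have hchain := mi_chain μ (fun ω => (decide (k < τ ω), Vh k ω)) Xf (P k)
      have hchain2 := cmi_chain μ (fun ω => decide (k < τ ω)) (fun ω => Vh k ω) Xf (P k)
      -- flag term
      have hflagbound : cmi μ (fun ω => decide (k < τ ω)) Xf (P k)
          ≤ ent μ (Fl (k+1)) - ent μ (Fl k) := by
        have c1 := cmi_le_condEnt hμ0 (fun ω => decide (k < τ ω)) Xf (P k)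
        have c2 := cond_reduce hμ0 (fun ω => decide (k < τ ω)) (P k)
          (Prod.fst : (Fin k → Bool) × (Fin k → 𝒱) → (Fin k → Bool))
        have c2' : ent μ (fun ω => (decide (k < τ ω), (P k ω).1))
            = ent μ (fun ω => (decide (k < τ ω), Fl k ω)) := rfl
        have c2'' : ent μ (fun ω => (P k ω).1) = ent μ (Fl k) := rfl
        have c3 : ent μ (fun ω => (decide (k < τ ω), Fl k ω)) = ent μ (Fl (k+1)) := by
          apply ent_congr
          intro ω ω'
          simp only [Prod.mk.injEq]
          rw [hFliff, hFliff, hsplit k (fun j => decide (j < τ ω) = decide (j < τ ω'))]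
        rw [c2', c2'', c3] at c2
        linarith
      -- channel term
      have hchanbound : cmi μ (fun ω => Vh k ω) Xf
            (fun ω => (decide (k < τ ω), P k ω))
          ≤ capacity Γ * pm μ (fun ω => decide (k < τ ω)) true := by
        set U : Ω → Bool × ((Fin k → Bool) × (Fin k → 𝒱)) :=
          fun ω => (decide (k < τ ω), P k ω) with hU
        have hconst : ∀ u, ¬ (u.1 = true) → ∀ ω ω', U ω = u → U ω' = u
            → Vh k ω = Vh k ω' := by
          intro u hu ω ω' h h'
          have h1 : decide (k < τ ω) = u.1 := congrArg Prod.fst h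
          have h2 : decide (k < τ ω') = u.1 := congrArg Prod.fst h'
          have hn1 : ¬ (k < τ ω) := by
            intro hk; exact hu (h1 ▸ decide_eq_true hk)
          have hn2 : ¬ (k < τ ω') := by
            intro hk; exact hu (h2 ▸ decide_eq_true hk)
          rw [hVh]
          simp only
          rw [if_neg hn1, if_neg hn2]
        have hchan' : ∀ u, u.1 = true → ∃ Wf : Ω → 𝒲, ∀ w a b,
            pm (fun ω => if U ω = u then μ ω else 0)
                (fun ω => (Wf ω, (Vh k ω, Xf ω))) (w, (a, b))
              = Γ w a * pm (fun ω => if U ω = u then μ ω else 0)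
                  (fun ω => (Wf ω, Xf ω)) (w, b) := by
          intro u hu
          refine ⟨W k, ?_⟩
          intro w a b
          by_cases hall : ∀ j : Fin k, u.2.1 j = true
          · have hchar : ∀ ω, U ω = u ↔
                (k < τ ω ∧ ∀ j : Fin k, V (j:ℕ) ω = u.2.2 j) := by
              intro ω
              constructor
              · intro h
                have hflag : decide (k < τ ω) = true := by
                  rw [← hu]; exact congrArg Prod.fst h
                have hk : k < τ ω := of_decide_eq_true hflag
                refine ⟨hk, fun j => ?_⟩
                have hvh : Vh (j:ℕ) ω = u.2.2 j :=
                  congrFun (congrArg Prod.snd (congrArg Prod.snd h)) j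
                rw [hVh] at hvh
                simp only at hvh
                rwa [if_pos (lt_trans j.2 hk)] at hvh
              · rintro ⟨hk, hv⟩
                rw [hU]
                have hfst : decide (k < τ ω) = u.1 := by
                  rw [hu]; exact decide_eq_true hk
                have hflags : Fl k ω = u.2.1 := by
                  funext j
                  rw [hFl]
                  simp only
                  rw [hall j]
                  exact decide_eq_true (lt_trans j.2 hk)
                have hvals : (fun j : Fin k => Vh (j:ℕ) ω) = u.2.2 := by
                  funext j
                  rw [hVh]
                  simp only
                  rw [if_pos (lt_trans j.2 hk)]
                  exact hv j
                have : P k ω = u.2 := by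
                  rw [hP]
                  simp only
                  rw [hflags, hvals]
                rw [Prod.ext_iff]
                exact ⟨hfst, this⟩
            have e1 : pm (fun ω => if U ω = u then μ ω else 0)
                  (fun ω => (W k ω, (Vh k ω, Xf ω))) (w, (a, b))
                = ∑ ω ∈ Finset.univ.filter (fun ω =>
                    V k ω = a ∧ W k ω = w ∧ (∀ j : Fin k, V (j:ℕ) ω = u.2.2 j)
                      ∧ Xf ω = b ∧ k < τ ω), μ ω := by
              rw [pm_cond μ U u _ _, pm_def]
              apply Finset.sum_congr _ (fun _ _ => rfl)
              ext ω
              simp only [Finset.mem_filter, Finset.mem_univ, true_and, Prod.mk.injEq]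
              constructor
              · rintro ⟨⟨hw, hvh, hxf⟩, hUω⟩
                obtain ⟨hk, hv⟩ := (hchar ω).1 hUω
                have hVk : V k ω = a := by
                  rw [hVh] at hvh
                  simp only at hvh
                  rwa [if_pos hk] at hvh
                exact ⟨hVk, hw, hv, hxf, hk⟩
              · rintro ⟨hVk, hw, hv, hxf, hk⟩
                have hvh : Vh k ω = a := by
                  rw [hVh]
                  simp only
                  rwa [if_pos hk]
                exact ⟨⟨hw, hvh, hxf⟩, (hchar ω).2 ⟨hk, hv⟩⟩
            have e2 : pm (fun ω => if U ω = u then μ ω else 0)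
                  (fun ω => (W k ω, Xf ω)) (w, b)
                = ∑ ω ∈ Finset.univ.filter (fun ω =>
                    W k ω = w ∧ (∀ j : Fin k, V (j:ℕ) ω = u.2.2 j)
                      ∧ Xf ω = b ∧ k < τ ω), μ ω := by
              rw [pm_cond μ U u _ _, pm_def]
              apply Finset.sum_congr _ (fun _ _ => rfl)
              ext ω
              simp only [Finset.mem_filter, Finset.mem_univ, true_and, Prod.mk.injEq]
              constructor
              · rintro ⟨⟨hw, hxf⟩, hUω⟩
                obtain ⟨hk, hv⟩ := (hchar ω).1 hUω
                exact ⟨hw, hv, hxf, hk⟩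
              · rintro ⟨hw, hv, hxf, hk⟩
                exact ⟨⟨hw, hxf⟩, (hchar ω).2 ⟨hk, hv⟩⟩
            rw [e1, e2]
            exact hchan k w a (fun j => u.2.2 j) b
          · -- inconsistent condition value: empty fiber
            have hempty : ∀ ω, ¬ (U ω = u) := by
              intro ω h
              apply hall
              intro j
              have hflag : decide (k < τ ω) = true := by
                rw [← hu]; exact congrArg Prod.fst h
              have hk : k < τ ω := of_decide_eq_true hflag
              have hflags : Fl k ω = u.2.1 :=
                congrArg Prod.fst (congrArg Prod.snd h)
              rw [← hflags, hFl]
              simp only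
              exact decide_eq_true (lt_trans j.2 hk)
            have hz1 : pm (fun ω => if U ω = u then μ ω else 0)
                (fun ω => (W k ω, (Vh k ω, Xf ω))) (w, (a, b)) = 0 := by
              rw [pm_def]
              apply Finset.sum_eq_zero
              intro ω _
              rw [if_neg (hempty ω)]
            have hz2 : pm (fun ω => if U ω = u then μ ω else 0)
                (fun ω => (W k ω, Xf ω)) (w, b) = 0 := by
              rw [pm_def]
              apply Finset.sum_eq_zero
              intro ω _
              rw [if_neg (hempty ω)]
            rw [hz1, hz2, mul_zero]
        have hcc := cmi_channel hμ0 hΓ0 hΓ1 (fun ω => Vh k ω) Xf U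
          (fun u => u.1 = true) hconst hchan'
        refine le_trans hcc (le_of_eq ?_)
        congr 1
        rw [sum_pm_filter μ U (fun u => u.1 = true), pm_def]
        apply Finset.sum_congr _ (fun _ _ => rfl)
        ext ω
        simp only [Finset.mem_filter, Finset.mem_univ, true_and]
        exact Iff.rfl
      rw [hrec, hchain, hchain2, Finset.sum_range_succ, mul_add]
      linarith
  -- data processing from `P N` to the variable-length list
  have hdpi : mi μ (fun ω => (List.range (τ ω)).map (fun i => V i ω)) Xf
      ≤ mi μ (P N) Xf := by
    apply mi_dpi hμ0
    intro ω ω' h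
    rw [hPiff] at h
    have hττ : τ ω = τ ω' := by
      rw [← hflagτ ω ω']
      rw [hFliff]
      exact h.1
    apply List.ext_getElem
    · simp [hττ]
    · intro i h1 h2
      simp only [List.getElem_map, List.getElem_range]
      simp only [List.length_map, List.length_range] at h1
      have hiN : i < N := lt_trans h1 (hτN ω)
      have := h.2 ⟨i, hiN⟩
      rw [hVh] at this
      simp only at this
      rw [if_pos h1, if_pos (hττ ▸ h1)] at this
      exact this
  have hentτ : ent μ (Fl N) = ent μ τ := ent_congr hflagτ
  have hEτ : ∑ i ∈ Finset.range N, pm μ (fun ω => decide (i < τ ω)) true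
      = ∑ ω, μ ω * (τ ω : ℝ) := by
    have h1 : ∀ i, pm μ (fun ω => decide (i < τ ω)) true
        = ∑ ω, if i < τ ω then μ ω else 0 := by
      intro i
      rw [pm, Finset.sum_filter]
      apply Finset.sum_congr rfl
      intro ω _
      simp
    rw [Finset.sum_congr rfl (fun i _ => h1 i), Finset.sum_comm]
    apply Finset.sum_congr rfl
    intro ω _
    rw [← Finset.sum_filter]
    have h2 : (Finset.range N).filter (fun i => i < τ ω) = Finset.range (τ ω) := by
      ext i
      simp only [Finset.mem_filter, Finset.mem_range]
      constructor
      · rintro ⟨_, h⟩; exact h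
      · intro h; exact ⟨lt_trans h (hτN ω), h⟩
    rw [h2, Finset.sum_const, Finset.card_range, nsmul_eq_mul, mul_comm]
  calc mi μ (fun ω => (List.range (τ ω)).map (fun i => V i ω)) Xf
      ≤ mi μ (P N) Xf := hdpi
    _ ≤ ent μ (Fl N) + capacity Γ *
        ∑ i ∈ Finset.range N, pm μ (fun ω => decide (i < τ ω)) true := main N
    _ = ent μ τ + capacity Γ * ∑ ω, μ ω * (τ ω : ℝ) := by rw [hentτ, hEτ]
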